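/- Let u : [a,b] → ℝ be Hölder continuous of order r ∈ (0,1] with constant H and f : [a,b] → ℝ of bounded variation. Then for all x ∈ [a,b], |[f(b) − f(a)]·u(x) − ∫ₐᵇ u(s) df(s)| ≤ H · ((b−a)/2 + |x − (a+b)/2|)^r · V(f;[a,b]). -/

import Mathlib

/-- A tagged partition of the interval `[a, b]`. -/
structure TaggedPartition (a b : ℝ) where
  n : ℕ
  pts : ℕ → ℝ
  tag : ℕ → ℝ
  mono : ∀ i, pts i ≤ pts (i + 1)
  first : pts 0 = a
  last : pts n = b
  tag_mem : ∀ i, pts i ≤ tag i ∧ tag i ≤ pts (i + 1)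

/-- The Riemann–Stieltjes sum of `f` with respect to `u` over a tagged partition. -/
def RSsum (f u : ℝ → ℝ) {a b : ℝ} (P : TaggedPartition a b) : ℝ :=
  ∑ i ∈ Finset.range P.n, f (P.tag i) * (u (P.pts (i + 1)) - u (P.pts i))

/-- `IsRSIntegral f u a b I` means the Riemann–Stieltjes integral `∫ₐᵇ f du` exists
and equals `I`: Riemann–Stieltjes sums converge to `I` as the mesh tends to `0`. -/
def IsRSIntegral (f u : ℝ → ℝ) (a b I : ℝ) : Prop :=
  ∀ ε > 0, ∃ δ > 0, ∀ P : TaggedPartition a b,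
    (∀ i < P.n, P.pts (i + 1) - P.pts i < δ) → |RSsum f u P - I| < ε

/-- The total (Jordan) variation of `u` on `[a, b]`. -/
noncomputable def totalVar (u : ℝ → ℝ) (a b : ℝ) : ℝ :=
  (eVariationOn u (Set.Icc a b)).toReal

/-- A uniform tagged partition of `[a,b]` with `n+1` pieces. -/
noncomputable def uniformTP (a b : ℝ) (hab : a ≤ b) (n : ℕ) (hn : 0 < n) :
    TaggedPartition a b where
  n := n
  pts i := a + (min i n : ℕ) * ((b - a) / n)
  tag i := a + (min i n : ℕ) * ((b - a) / n)
  mono i := by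
    have h1 : ((min i n : ℕ) : ℝ) ≤ ((min (i+1) n : ℕ) : ℝ) := by
      exact_mod_cast min_le_min (Nat.le_succ i) le_rfl
    have h2 : (0:ℝ) ≤ (b - a) / n := div_nonneg (by linarith) (Nat.cast_nonneg n)
    nlinarith
  first := by simp
  last := by
    have hn' : (n:ℝ) ≠ 0 := Nat.cast_ne_zero.mpr hn.ne'
    field_simp
    rw [min_self]; ring
  tag_mem i := ⟨le_rfl, by
    have h1 : ((min i n : ℕ) : ℝ) ≤ ((min (i+1) n : ℕ) : ℝ) := by
      exact_mod_cast min_le_min (Nat.le_succ i) le_rfl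
    have h2 : (0:ℝ) ≤ (b - a) / n := div_nonneg (by linarith) (Nat.cast_nonneg n)
    nlinarith⟩

theorem trapezoid_dual_parts_bounded_variation
    (a b H r x J : ℝ) (f u : ℝ → ℝ)
    (hr : 0 < r) (hr1 : r ≤ 1) (hH : 0 ≤ H)
    (hu : ∀ s ∈ Set.Icc a b, ∀ t ∈ Set.Icc a b, |u s - u t| ≤ H * |s - t| ^ r)
    (hf : BoundedVariationOn f (Set.Icc a b))
    (hx : x ∈ Set.Icc a b)
    (hJ : IsRSIntegral u f a b J) :
    |(f b - f a) * u x - J| ≤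
      H * ((b - a) / 2 + |x - (a + b) / 2|) ^ r * totalVar f a b := by
  obtain ⟨hax, hxb⟩ := hx
  have hab : a ≤ b := hax.trans hxb
  set M : ℝ := (b - a) / 2 + |x - (a + b) / 2| with hMdef
  have habs1 : x - (a + b) / 2 ≤ |x - (a + b) / 2| := le_abs_self _
  have habs2 : -(x - (a + b) / 2) ≤ |x - (a + b) / 2| := neg_le_abs _
  have hM0 : 0 ≤ M := by rw [hMdef]; nlinarith
  have hVar0 : 0 ≤ totalVar f a b := ENNReal.toReal_nonneg
  -- key estimate for any tagged partition
  have key : ∀ P : TaggedPartition a b,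
      |(f b - f a) * u x - RSsum u f P| ≤ H * M ^ r * totalVar f a b := by
    intro P
    have hmono : Monotone P.pts := monotone_nat_of_le_succ P.mono
    have hpts_mem : ∀ i ≤ P.n, P.pts i ∈ Set.Icc a b := by
      intro i hi
      constructor
      · have h := hmono (Nat.zero_le i); rwa [P.first] at h
      · have h := hmono hi; rwa [P.last] at h
    have htag_mem : ∀ i < P.n, P.tag i ∈ Set.Icc a b := by
      intro i hi
      constructor
      · exact (hpts_mem i hi.le).1.trans (P.tag_mem i).1
      · exact (P.tag_mem i).2.trans (hpts_mem (i+1) hi).2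
    have htel : f b - f a = ∑ i ∈ Finset.range P.n, (f (P.pts (i+1)) - f (P.pts i)) := by
      rw [Finset.sum_range_sub (fun i => f (P.pts i)) P.n, P.first, P.last]
    have hdiff : (f b - f a) * u x - RSsum u f P
        = ∑ i ∈ Finset.range P.n, (u x - u (P.tag i)) * (f (P.pts (i+1)) - f (P.pts i)) := by
      rw [htel, RSsum, Finset.sum_mul, ← Finset.sum_sub_distrib]
      exact Finset.sum_congr rfl fun i _ => by ring
    rw [hdiff]
    calc |∑ i ∈ Finset.range P.n, (u x - u (P.tag i)) * (f (P.pts (i+1)) - f (P.pts i))|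
        ≤ ∑ i ∈ Finset.range P.n, |(u x - u (P.tag i)) * (f (P.pts (i+1)) - f (P.pts i))| :=
          Finset.abs_sum_le_sum_abs _ _
      _ ≤ ∑ i ∈ Finset.range P.n, (H * M ^ r) * |f (P.pts (i+1)) - f (P.pts i)| := by
          apply Finset.sum_le_sum
          intro i hi
          rw [Finset.mem_range] at hi
          rw [abs_mul]
          apply mul_le_mul_of_nonneg_right _ (abs_nonneg _)
          calc |u x - u (P.tag i)| ≤ H * |x - P.tag i| ^ r :=
                hu x ⟨hax, hxb⟩ (P.tag i) (htag_mem i hi)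
            _ ≤ H * M ^ r := by
                apply mul_le_mul_of_nonneg_left _ hH
                apply Real.rpow_le_rpow (abs_nonneg _) _ hr.le
                obtain ⟨hta, htb⟩ := htag_mem i hi
                have hbx : b - x ≤ M := by rw [hMdef]; linarith
                have hxa : x - a ≤ M := by rw [hMdef]; linarith
                rw [abs_le]; constructor <;> linarith
      _ = (H * M ^ r) * ∑ i ∈ Finset.range P.n, |f (P.pts (i+1)) - f (P.pts i)| := by
          rw [Finset.mul_sum]
      _ ≤ (H * M ^ r) * totalVar f a b := by
          apply mul_le_mul_of_nonneg_left _ (by positivity)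
          have hsum := eVariationOn.sum_le_of_monotoneOn_Iic (f := f) (n := P.n) (u := P.pts)
            (hmono.monotoneOn _) (fun i hi => hpts_mem i hi)
          have hfin : ∀ i ∈ Finset.range P.n,
              edist (f (P.pts (i+1))) (f (P.pts i)) ≠ ⊤ := fun i _ => edist_ne_top _ _
          calc ∑ i ∈ Finset.range P.n, |f (P.pts (i+1)) - f (P.pts i)|
              = (∑ i ∈ Finset.range P.n, edist (f (P.pts (i+1))) (f (P.pts i))).toReal := by
                rw [ENNReal.toReal_sum hfin]
                exact Finset.sum_congr rfl fun i _ => by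
                  rw [edist_dist, ENNReal.toReal_ofReal dist_nonneg, Real.dist_eq]
            _ ≤ totalVar f a b := ENNReal.toReal_mono hf hsum
  -- epsilon argument
  refine le_of_forall_pos_le_add fun ε hε => ?_
  obtain ⟨δ, hδ, hP⟩ := hJ ε hε
  set n : ℕ := ⌈(b - a) / δ⌉₊ + 1 with hn
  have hn0 : 0 < n := Nat.succ_pos _
  set P := uniformTP a b hab n hn0 with hPdef
  have hmesh : ∀ i < P.n, P.pts (i+1) - P.pts i < δ := by
    intro i hi
    have hn' : (0:ℝ) < n := by exact_mod_cast hn0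
    have hceil : (b - a) / δ ≤ (⌈(b - a) / δ⌉₊ : ℝ) := Nat.le_ceil _
    have hnge : (b - a) / δ + 1 ≤ (n:ℝ) := by
      rw [hn]; push_cast; linarith
    have hba : b - a < δ * n := by
      have : δ * ((b - a) / δ + 1) ≤ δ * n := by nlinarith
      rw [mul_add, mul_div_cancel₀ _ (ne_of_gt hδ), mul_one] at this
      linarith
    have hstep : ((min (i+1) n : ℕ) : ℝ) - ((min i n : ℕ) : ℝ) ≤ 1 := by
      have h := (Nat.cast_le (α := ℝ)).2 (show min (i+1) n ≤ min i n + 1 by omega)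
      rw [Nat.cast_add, Nat.cast_one] at h; linarith
    have hmin0 : (0:ℝ) ≤ ((min (i+1) n : ℕ) : ℝ) - ((min i n : ℕ) : ℝ) := by
      have : min i n ≤ min (i+1) n := min_le_min (Nat.le_succ i) le_rfl
      have := (Nat.cast_le (α := ℝ)).2 this
      linarith
    have hdivlt : (b - a) / n < δ := by
      rw [div_lt_iff₀ hn']
      linarith [hba, mul_comm δ (n:ℝ)]
    have hdiv0 : (0:ℝ) ≤ (b - a) / n := div_nonneg (by linarith) (Nat.cast_nonneg n)
    show a + (min (i+1) n : ℕ) * ((b - a) / n) - (a + (min i n : ℕ) * ((b - a) / n)) < δ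
    have : (((min (i+1) n : ℕ) : ℝ) - ((min i n : ℕ) : ℝ)) * ((b - a) / n) ≤ 1 * ((b - a) / n) :=
      mul_le_mul_of_nonneg_right hstep hdiv0
    nlinarith
  have h1 := key P
  have h2 := hP P hmesh
  calc |(f b - f a) * u x - J|
      ≤ |(f b - f a) * u x - RSsum u f P| + |RSsum u f P - J| := by
        have := abs_sub_le ((f b - f a) * u x) (RSsum u f P) J
        simpa using this
    _ ≤ H * M ^ r * totalVar f a b + ε := add_le_add h1 h2.le
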